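/- NQGL does not have the Craig interpolation property: with A(p) := ∀u □(p → P(u)), the NQGL-provable implication ∃v_0(⊡(A(Q(v_0)) ↔ Q(v_0)) ∧ Q(v_0)) → ∀v_1(⊡(A(R(v_1)) ↔ R(v_1)) → R(v_1)) has no interpolant: there is no sentence G containing only the predicate symbol P with NQGL proving the antecedent → G and G → the consequent. -/

import Mathlib

namespace PML

/-- Formulas of predicate modal logic, with propositional variables (language L''). -/
inductive Fml : Type
  | verum : Fml
  | falsum : Fml
  | pvar (q : ℕ) : Fml
  | pred (P : ℕ) (args : List ℕ) : Fml
  | neg (A : Fml) : Fml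
  | imp (A B : Fml) : Fml
  | all (u : ℕ) (A : Fml) : Fml
  | box (A : Fml) : Fml

namespace Fml

def lor (A B : Fml) : Fml := A.neg.imp B
def land (A B : Fml) : Fml := (A.imp B.neg).neg
def iff (A B : Fml) : Fml := (A.imp B).land (B.imp A)
def ex (u : ℕ) (A : Fml) : Fml := (Fml.all u A.neg).neg
def boxdot (A : Fml) : Fml := A.box.land A

def boxIter : ℕ → Fml → Fml
  | 0, A => A
  | n + 1, A => (boxIter n A).box

/-- Free variables. -/
def free : Fml → Finset ℕ
  | pred _ args => args.toFinset
  | neg A => A.free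
  | imp A B => A.free ∪ B.free
  | all u A => A.free.erase u
  | box A => A.free
  | _ => ∅

/-- Bound variables. -/
def bound : Fml → Finset ℕ
  | neg A => A.bound
  | imp A B => A.bound ∪ B.bound
  | all u A => insert u A.bound
  | box A => A.bound
  | _ => ∅

/-- Propositional variables occurring in a formula. -/
def pvars : Fml → Finset ℕ
  | pvar q => {q}
  | neg A => A.pvars
  | imp A B => A.pvars ∪ B.pvars
  | all _ A => A.pvars
  | box A => A.pvars
  | _ => ∅

/-- Predicate symbols occurring in a formula. -/
def preds : Fml → Finset ℕ
  | pred P _ => {P}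
  | neg A => A.preds
  | imp A B => A.preds ∪ B.preds
  | all _ A => A.preds
  | box A => A.preds
  | _ => ∅

/-- Predicate symbols together with the arity they are used with. -/
def predSig : Fml → Finset (ℕ × ℕ)
  | pred P args => {(P, args.length)}
  | neg A => A.predSig
  | imp A B => A.predSig ∪ B.predSig
  | all _ A => A.predSig
  | box A => A.predSig
  | _ => ∅

/-- Rename free occurrences of the variable `u` to `v`. -/
def rename : Fml → ℕ → ℕ → Fml
  | pred P args, u, v => pred P (args.map fun x => if x = u then v else x)
  | neg A, u, v => (A.rename u v).neg
  | imp A B, u, v => (A.rename u v).imp (B.rename u v)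
  | all w A, u, v => if w = u then all w A else all w (A.rename u v)
  | box A, u, v => (A.rename u v).box
  | A, _, _ => A

/-- Substitution of a formula for a propositional variable. -/
def psub : Fml → ℕ → Fml → Fml
  | pvar q, p, B => if q = p then B else pvar q
  | neg A, p, B => (A.psub p B).neg
  | imp A C, p, B => (A.psub p B).imp (C.psub p B)
  | all u A, p, B => all u (A.psub p B)
  | box A, p, B => (A.psub p B).box
  | A, _, _ => A

/-- Simultaneous substitution of formulas for all propositional variables. -/
def msub : Fml → (ℕ → Fml) → Fml
  | pvar q, σ => σ q
  | neg A, σ => (A.msub σ).neg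
  | imp A C, σ => (A.msub σ).imp (C.msub σ)
  | all u A, σ => all u (A.msub σ)
  | box A, σ => (A.msub σ).box
  | A, _ => A

/-- Depth-indexed substitution: occurrences of `p` at modal depth `i` are replaced by `σ i`. -/
def dsub : Fml → ℕ → (ℕ → Fml) → Fml
  | pvar q, p, σ => if q = p then σ 0 else pvar q
  | neg A, p, σ => (A.dsub p σ).neg
  | imp A C, p, σ => (A.dsub p σ).imp (C.dsub p σ)
  | all u A, p, σ => all u (A.dsub p σ)
  | box A, p, σ => (A.dsub p (fun i => σ (i + 1))).box
  | A, _, _ => A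

/-- `A(p)[B_0,…,B_k]` for a list `[B_0,…,B_k]`. -/
def dsubL (A : Fml) (p : ℕ) (L : List Fml) : Fml := A.dsub p (fun i => L.getD i verum)

/-- `A^{⊤(n)}`: replace every boxed subformula at modal depth `n` by `⊤`. -/
def eraseT : ℕ → Fml → Fml
  | 0, box _ => verum
  | n + 1, box A => (eraseT n A).box
  | n, neg A => (eraseT n A).neg
  | n, imp A B => (eraseT n A).imp (eraseT n B)
  | n, all u A => all u (eraseT n A)
  | _, A => A

/-- `occursAt p A d`: the propositional variable `p` occurs in `A` at modal depth `d`. -/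
def occursAt (p : ℕ) : Fml → ℕ → Prop
  | pvar q, d => q = p ∧ d = 0
  | neg A, d => occursAt p A d
  | imp A B, d => occursAt p A d ∨ occursAt p B d
  | all _ A, d => occursAt p A d
  | box A, d => ∃ d', d = d' + 1 ∧ occursAt p A d'
  | _, _ => False

/-- `A` is modalized in `p`: no occurrence of `p` at depth `0`. -/
def Modalized (p : ℕ) (A : Fml) : Prop := ¬ occursAt p A 0

/-- Conjunction of a list of formulas. -/
def conj : List Fml → Fml
  | [] => verum
  | A :: L => A.land (conj L)

/-- The canonical fixed-point sequence:
`A_0 := A^{⊤(0)}(p)[⊤]`, `A_{k+1} := A^{⊤(k+1)}(p)[⊤, A_k, …, A_0]`. -/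
def fpSeq (p : ℕ) (A : Fml) : ℕ → Fml
  | 0 => (eraseT 0 A).dsub p (fun _ => verum)
  | n + 1 => (eraseT (n + 1) A).dsub p
      (fun i => match i with
        | 0 => verum
        | j + 1 => fpSeq p A (n - j))
  termination_by k => k
  decreasing_by omega

end Fml

open Fml

/-- Axioms of predicate logic, together with the modal distribution axiom K. -/
inductive Ax : Fml → Prop
  | imp1 (A B : Fml) : Ax (A.imp (B.imp A))
  | imp2 (A B C : Fml) : Ax ((A.imp (B.imp C)).imp ((A.imp B).imp (A.imp C)))
  | contra (A B : Fml) : Ax ((A.neg.imp B.neg).imp (B.imp A))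
  | verum : Ax Fml.verum
  | exfalso (A : Fml) : Ax (Fml.falsum.imp A)
  | negE (A : Fml) : Ax (A.neg.imp (A.imp Fml.falsum))
  | negI (A : Fml) : Ax ((A.imp Fml.falsum).imp A.neg)
  | allE (A : Fml) (u v : ℕ) (h : v ∉ A.bound) : Ax ((Fml.all u A).imp (A.rename u v))
  | allK (A B : Fml) (u : ℕ) :
      Ax ((Fml.all u (A.imp B)).imp ((Fml.all u A).imp (Fml.all u B)))
  | allV (A : Fml) (u : ℕ) (h : u ∉ A.free) : Ax (A.imp (Fml.all u A))
  | k (A B : Fml) : Ax (((A.imp B).box).imp (A.box.imp B.box))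

/-- Hilbert-style provability from the base axioms plus extra axioms `Ext`,
closed under modus ponens, necessitation and generalization. -/
inductive Prf (Ext : Fml → Prop) : Fml → Prop
  | ax {A : Fml} : Ax A → Prf Ext A
  | ext {A : Fml} : Ext A → Prf Ext A
  | mp {A B : Fml} : Prf Ext (A.imp B) → Prf Ext A → Prf Ext B
  | nec {A : Fml} : Prf Ext A → Prf Ext A.box
  | gen {A : Fml} (u : ℕ) : Prf Ext A → Prf Ext (Fml.all u A)

/-- The smallest normal predicate modal logic QK. -/
def QK : Fml → Prop := Prf (fun _ => False)

inductive Ax4 : Fml → Prop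
  | four (A : Fml) : Ax4 (A.box.imp A.box.box)

/-- QK4 : QK plus the axiom 4. -/
def QK4 : Fml → Prop := Prf Ax4

inductive AxL : Fml → Prop
  | lob (A : Fml) : AxL (((A.box.imp A).box).imp A.box)

/-- QGL : QK plus Löb's axiom. -/
def QGL : Fml → Prop := Prf AxL

/-- NQGL : QK4 plus the infinitary rule BL. -/
inductive NQGL : Fml → Prop
  | ax {A : Fml} : Ax A → NQGL A
  | four (A : Fml) : NQGL (A.box.imp A.box.box)
  | mp {A B : Fml} : NQGL (A.imp B) → NQGL A → NQGL B
  | nec {A : Fml} : NQGL A → NQGL A.box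
  | gen {A : Fml} (u : ℕ) : NQGL A → NQGL (Fml.all u A)
  | bl {A : Fml} : (∀ n : ℕ, NQGL ((boxIter (n + 1) Fml.falsum).imp A)) → NQGL A

/-- Σ-formulas. -/
inductive IsSigma : Fml → Prop
  | box (A : Fml) : IsSigma A.box
  | lor {A B : Fml} : IsSigma A → IsSigma B → IsSigma (A.lor B)
  | land {A B : Fml} : IsSigma A → IsSigma B → IsSigma (A.land B)
  | ex {A : Fml} (u : ℕ) : IsSigma A → IsSigma (Fml.ex u A)

/- ## Kripke semantics -/

structure KFrame where
  W : Type
  R : W → W → Prop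
  Dom : Type
  D : W → Set Dom
  Dne : ∀ w, (D w).Nonempty
  mono : ∀ {w w'}, R w w' → D w ⊆ D w'

structure KModel extends KFrame where
  I : W → ℕ → List Dom → Prop
  V : W → ℕ → Prop

def Sat (M : KModel) : Fml → M.W → (ℕ → M.Dom) → Prop
  | .verum, _, _ => True
  | .falsum, _, _ => False
  | .pvar q, w, _ => M.V w q
  | .pred P args, w, ρ => M.I w P (args.map ρ)
  | .neg A, w, ρ => ¬ Sat M A w ρ
  | .imp A B, w, ρ => Sat M A w ρ → Sat M B w ρ
  | .all u A, w, ρ => ∀ a ∈ M.D w, Sat M A w (Function.update ρ u a)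
  | .box A, w, ρ => ∀ v, M.R w v → Sat M A v ρ

/-- Validity in a model. -/
def MVal (M : KModel) (A : Fml) : Prop :=
  ∀ (w : M.W) (ρ : ℕ → M.Dom), (∀ x, ρ x ∈ M.D w) → Sat M A w ρ

/-- Validity on a frame. -/
def FVal (F : KFrame) (A : Fml) : Prop :=
  ∀ (I : F.W → ℕ → List F.Dom → Prop) (V : F.W → ℕ → Prop),
    MVal { toKFrame := F, I := I, V := V } A

/-- Smoryński's model. -/
def MS : KModel where
  W := ℕ
  R := fun m n => n < m
  Dom := ℕ
  D := fun n => {m | n ≤ m}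
  Dne := fun n => ⟨n, le_refl n⟩
  mono := by intro w w' h x hx; simp only [Set.mem_setOf_eq] at *; omega
  I := fun w P L => P = 0 ∧ ∀ m ∈ L, m ≠ w + 1
  V := fun _ _ => False

/-- The finite truncations of Smoryński's model. -/
def Mk (k : ℕ) : KModel where
  W := Fin (k + 1)
  R := fun m n => (n : ℕ) < (m : ℕ)
  Dom := ℕ
  D := fun n => {m | (n : ℕ) ≤ m ∧ m ≤ k + 2}
  Dne := fun n => ⟨(n : ℕ), by simp only [Set.mem_setOf_eq]; have := n.isLt; omega⟩
  mono := by intro w w' h x hx; simp only [Set.mem_setOf_eq] at *; omega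
  I := fun w P L => P = 0 ∧ ∀ m ∈ L, m ≠ (w : ℕ) + 1
  V := fun _ _ => False

/-- `A` contains only the unary predicate symbol `P` (coded `0`) and no propositional variables. -/
def OnlyP (A : Fml) : Prop := A.predSig ⊆ {(0, 1)} ∧ A.pvars = ∅

/-- The atomic formula `P(u)`. -/
def Pat (u : ℕ) : Fml := Fml.pred 0 [u]

/-- `h(F) ≤ n`: there is no chain of `n+1` successive `R`-steps. -/
def HeightLe (F : KFrame) (n : ℕ) : Prop :=
  ∀ c : ℕ → F.W, ¬ ∀ i < n + 1, F.R (c i) (c (i + 1))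

end PML

namespace PML
/-- `A(p) := ∀u □(p → P(u))`, with `p` the propositional variable 0, `u` the variable 0,
and `P` the unary predicate symbol 0. -/
def AMon : Fml := Fml.all 0 (((Fml.pvar 0).imp (Fml.pred 0 [0])).box)
/-- `A(B)`. -/
def AMonAp (B : Fml) : Fml := AMon.psub 0 B
/-- The antecedent `∃v₀(⊡(A(Q(v₀)) ↔ Q(v₀)) ∧ Q(v₀))`, with `v₀` the variable 1 and `Q`
the unary predicate symbol 1. -/
def ante : Fml :=
  Fml.ex 1 ((Fml.boxdot ((AMonAp (Fml.pred 1 [1])).iff (Fml.pred 1 [1]))).land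
    (Fml.pred 1 [1]))
/-- The consequent `∀v₁(⊡(A(R(v₁)) ↔ R(v₁)) → R(v₁))`, with `v₁` the variable 2 and `R`
the unary predicate symbol 2. -/
def cons : Fml :=
  Fml.all 2 ((Fml.boxdot ((AMonAp (Fml.pred 2 [2])).iff (Fml.pred 2 [2]))).imp
    (Fml.pred 2 [2]))
end PML

namespace PML
namespace Craig

open Fml

/-! ### Propositional provability with hypotheses -/

inductive PPrf (Γ : List Fml) : Fml → Prop
  | hyp {A : Fml} : A ∈ Γ → PPrf Γ A
  | ax {A : Fml} : Ax A → PPrf Γ A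
  | mp {A B : Fml} : PPrf Γ (A.imp B) → PPrf Γ A → PPrf Γ B

lemma PPrf.weak {Γ Δ : List Fml} {A : Fml} (h : PPrf Γ A) (s : ∀ X ∈ Γ, X ∈ Δ) :
    PPrf Δ A := by
  induction h with
  | hyp h => exact .hyp (s _ h)
  | ax h => exact .ax h
  | mp _ _ ih1 ih2 => exact .mp ih1 ih2

lemma PPrf.id (Γ : List Fml) (A : Fml) : PPrf Γ (A.imp A) :=
  .mp (.mp (.ax (Ax.imp2 A (A.imp A) A)) (.ax (Ax.imp1 A (A.imp A)))) (.ax (Ax.imp1 A A))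

lemma PPrf.ded {Γ : List Fml} {A B : Fml} (h : PPrf (A :: Γ) B) : PPrf Γ (A.imp B) := by
  induction h with
  | @hyp C h =>
    rcases List.mem_cons.mp h with h | h
    · subst h; exact PPrf.id _ _
    · exact .mp (.ax (Ax.imp1 C A)) (.hyp h)
  | @ax C h => exact .mp (.ax (Ax.imp1 C A)) (.ax h)
  | mp _ _ ih1 ih2 => exact .mp (.mp (.ax (Ax.imp2 ..)) ih1) ih2

lemma PPrf.unded {Γ : List Fml} {A B : Fml} (h : PPrf Γ (A.imp B)) : PPrf (A :: Γ) B :=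
  .mp (h.weak (fun X hX => List.mem_cons_of_mem _ hX)) (.hyp List.mem_cons_self)

lemma PPrf.exf {Γ : List Fml} {A : Fml} (h : PPrf Γ Fml.falsum) : PPrf Γ A :=
  .mp (.ax (Ax.exfalso A)) h

lemma PPrf.nE {Γ : List Fml} {A : Fml} (h1 : PPrf Γ A.neg) (h2 : PPrf Γ A) :
    PPrf Γ Fml.falsum := .mp (.mp (.ax (Ax.negE A)) h1) h2

lemma PPrf.nI {Γ : List Fml} {A : Fml} (h : PPrf (A :: Γ) Fml.falsum) : PPrf Γ A.neg :=
  .mp (.ax (Ax.negI A)) h.ded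

lemma PPrf.dne {Γ : List Fml} {A : Fml} (h : PPrf Γ A.neg.neg) : PPrf Γ A := by
  have h1 : PPrf Γ (A.neg.imp Fml.verum.neg) := by
    apply PPrf.ded
    apply PPrf.nI
    exact PPrf.nE (h.weak (by intro X hX; simp [hX])) (.hyp (by simp))
  exact .mp (.mp (.ax (Ax.contra A Fml.verum)) h1) (.ax Ax.verum)

lemma PPrf.dni {Γ : List Fml} {A : Fml} (h : PPrf Γ A) : PPrf Γ A.neg.neg := by
  apply PPrf.nI
  exact PPrf.nE (.hyp (by simp)) (h.weak (by intro X hX; simp [hX]))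

lemma PPrf.split {Γ : List Fml} {A C : Fml} (h1 : PPrf (A :: Γ) C)
    (h2 : PPrf (A.neg :: Γ) C) : PPrf Γ C := by
  apply PPrf.dne
  apply PPrf.nI
  have hA : PPrf (C.neg :: Γ) A.neg := by
    apply PPrf.nI
    apply PPrf.nE (A := C) (.hyp (by simp))
    exact h1.weak (by intro X hX; rcases List.mem_cons.mp hX with h | h <;> simp [h])
  have hC : PPrf (C.neg :: Γ) C :=
    .mp (h2.ded.weak (by intro X hX; simp [hX])) hA
  exact PPrf.nE (.hyp (by simp)) hC

lemma PPrf.toNQGL {A : Fml} (h : PPrf [] A) : NQGL A := by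
  induction h with
  | hyp h => simp at h
  | ax h => exact .ax h
  | mp _ _ ih1 ih2 => exact .mp ih1 ih2

/-! ### Propositional formulas and the tautology theorem -/

inductive PF : Type
  | fls : PF
  | tru : PF
  | atm (n : ℕ) : PF
  | neg (a : PF) : PF
  | imp (a b : PF) : PF

def PF.toFml (σ : ℕ → Fml) : PF → Fml
  | .fls => Fml.falsum
  | .tru => Fml.verum
  | .atm n => σ n
  | .neg a => (a.toFml σ).neg
  | .imp a b => (a.toFml σ).imp (b.toFml σ)

def PF.ev (b : ℕ → Bool) : PF → Bool
  | .fls => false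
  | .tru => true
  | .atm n => b n
  | .neg a => !(a.ev b)
  | .imp a c => !(a.ev b) || (c.ev b)

def PF.atoms : PF → List ℕ
  | .fls => []
  | .tru => []
  | .atm n => [n]
  | .neg a => a.atoms
  | .imp a c => a.atoms ++ c.atoms

def PF.pand (a b : PF) : PF := .neg (a.imp b.neg)
def PF.piff (a b : PF) : PF := (PF.imp a b).pand (PF.imp b a)

def lit (σ : ℕ → Fml) (b : ℕ → Bool) (n : ℕ) : Fml :=
  if b n then σ n else (σ n).neg

lemma kal (σ : ℕ → Fml) (b : ℕ → Bool) :
    ∀ (φ : PF) (Γ : List Fml), (∀ n ∈ φ.atoms, lit σ b n ∈ Γ) →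
      PPrf Γ (if φ.ev b = true then φ.toFml σ else (φ.toFml σ).neg) := by
  intro φ
  induction φ with
  | fls =>
    intro Γ _
    simp only [PF.ev, PF.toFml, Bool.false_eq_true, if_false]
    exact PPrf.nI (.hyp (by simp))
  | tru =>
    intro Γ _
    simp only [PF.ev, PF.toFml, if_true]
    exact .ax Ax.verum
  | atm n =>
    intro Γ hΓ
    have h := hΓ n (by simp [PF.atoms])
    simp only [PF.ev, PF.toFml]
    unfold lit at h
    exact .hyp h
  | neg a ih =>
    intro Γ hΓ
    have h := ih Γ (by intro n hn; exact hΓ n (by simpa [PF.atoms] using hn))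
    cases ha : PF.ev b a <;> simp only [ha] at h <;>
      simp only [PF.ev, ha, Bool.not_false, Bool.not_true, PF.toFml,
        Bool.false_eq_true, if_false, if_true] at h ⊢
    · exact h
    · exact h.dni
  | imp a c iha ihc =>
    intro Γ hΓ
    have ha' := iha Γ (by intro n hn; exact hΓ n (by simp [PF.atoms, hn]))
    have hc' := ihc Γ (by intro n hn; exact hΓ n (by simp [PF.atoms, hn]))
    cases hc : PF.ev b c <;> cases ha : PF.ev b a <;>
      simp only [ha, hc, Bool.false_eq_true, if_false, if_true] at ha' hc' <;>
      simp only [PF.ev, ha, hc, PF.toFml, Bool.not_false, Bool.not_true,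
        Bool.false_or, Bool.true_or, Bool.or_false, Bool.or_true,
        Bool.false_eq_true, if_false, if_true]
    · -- a false, c false : goal (A.imp C)
      apply PPrf.ded
      exact PPrf.exf (PPrf.nE (ha'.weak (by intro X hX; simp [hX])) (.hyp (by simp)))
    · -- a true, c false : goal ¬(A.imp C)
      apply PPrf.nI
      have hC : PPrf ((PF.toFml σ a).imp (PF.toFml σ c) :: Γ) (PF.toFml σ c) :=
        .mp (.hyp (by simp)) (ha'.weak (by intro X hX; simp [hX]))
      exact PPrf.nE (hc'.weak (by intro X hX; simp [hX])) hC
    · -- c true : goal A.imp C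
      exact .mp (.ax (Ax.imp1 ..)) hc'
    · exact .mp (.ax (Ax.imp1 ..)) hc'

lemma elimAux (σ : ℕ → Fml) (φ : PF) (h : ∀ b, φ.ev b = true) :
    ∀ (M : List ℕ) (b : ℕ → Bool) (Γ : List Fml),
      (∀ n ∈ φ.atoms, n ∈ M ∨ lit σ b n ∈ Γ) → PPrf Γ (φ.toFml σ) := by
  intro M
  induction M with
  | nil =>
    intro b Γ hb
    have := kal σ b φ Γ (fun n hn => (hb n hn).resolve_left (by simp))
    rwa [h b, if_pos rfl] at this
  | cons m M ih =>
    intro b Γ hb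
    apply PPrf.split (A := σ m)
    · apply ih (Function.update b m true) ((σ m) :: Γ)
      intro n hn
      by_cases hnm : n = m
      · subst hnm
        right; simp [lit, Function.update_self]
      · rcases hb n hn with hM | hΓ'
        · rcases List.mem_cons.mp hM with h' | h'
          · exact absurd h' hnm
          · exact Or.inl h'
        · right
          have : lit σ (Function.update b m true) n = lit σ b n := by
            simp [lit, Function.update_of_ne hnm]
          rw [this]; exact List.mem_cons_of_mem _ hΓ'
    · apply ih (Function.update b m false) ((σ m).neg :: Γ)
      intro n hn
      by_cases hnm : n = m
      · subst hnm
        right; simp [lit, Function.update_self]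
      · rcases hb n hn with hM | hΓ'
        · rcases List.mem_cons.mp hM with h' | h'
          · exact absurd h' hnm
          · exact Or.inl h'
        · right
          have : lit σ (Function.update b m false) n = lit σ b n := by
            simp [lit, Function.update_of_ne hnm]
          rw [this]; exact List.mem_cons_of_mem _ hΓ'

theorem nqgl_taut (φ : PF) (h : ∀ b, φ.ev b = true) (σ : ℕ → Fml) :
    NQGL (φ.toFml σ) :=
  (elimAux σ φ h φ.atoms (fun _ => false) [] (fun n hn => Or.inl hn)).toNQGL

/-! ### Decidable tautology checking -/

def assigns : List ℕ → List (ℕ → Bool)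
  | [] => [fun _ => false]
  | n :: L => ((assigns L).map (fun b => Function.update b n false)) ++
      ((assigns L).map (fun b => Function.update b n true))

lemma assigns_complete : ∀ (L : List ℕ) (b : ℕ → Bool),
    ∃ b' ∈ assigns L, ∀ n ∈ L, b' n = b n := by
  intro L
  induction L with
  | nil => intro b; exact ⟨fun _ => false, by simp [assigns], by simp⟩
  | cons n L ih =>
    intro b
    obtain ⟨b', hb', hval⟩ := ih b
    refine ⟨Function.update b' n (b n), ?_, ?_⟩
    · cases hbn : b n
      · exact List.mem_append_left _ (List.mem_map.mpr ⟨b', hb', rfl⟩)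
      · exact List.mem_append_right _ (List.mem_map.mpr ⟨b', hb', rfl⟩)
    · intro m hm
      by_cases hmn : m = n
      · subst hmn; simp [Function.update_self]
      · rw [Function.update_of_ne hmn]
        exact hval m ((List.mem_cons.mp hm).resolve_left hmn)

lemma ev_congr (φ : PF) : ∀ (b b' : ℕ → Bool), (∀ n ∈ φ.atoms, b n = b' n) →
    φ.ev b = φ.ev b' := by
  induction φ with
  | fls => intros; rfl
  | tru => intros; rfl
  | atm n => intro b b' h; exact h n (by simp [PF.atoms])
  | neg a ih =>
    intro b b' h
    simp only [PF.ev]; rw [ih b b' (fun n hn => h n (by simpa [PF.atoms] using hn))]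
  | imp a c iha ihc =>
    intro b b' h
    simp only [PF.ev]
    rw [iha b b' (fun n hn => h n (by simp [PF.atoms, hn])),
        ihc b b' (fun n hn => h n (by simp [PF.atoms, hn]))]

def PF.check (φ : PF) : Bool := (assigns φ.atoms.dedup).all (fun b => φ.ev b)

lemma taut_of_check (φ : PF) (h : φ.check = true) : ∀ b, φ.ev b = true := by
  intro b
  obtain ⟨b', hb', he⟩ := assigns_complete φ.atoms.dedup b
  have := List.all_eq_true.mp h b' hb'
  rw [ev_congr φ b b' (fun n hn => (he n (List.mem_dedup.mpr hn)).symm)]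
  exact this

def pfσ (L : List Fml) : ℕ → Fml := fun n => L.getD n Fml.verum

def tauN (φ : PF) (L : List Fml) (h : φ.check = true) : NQGL (φ.toFml (pfσ L)) :=
  nqgl_taut φ (taut_of_check φ h) _

end Craig
end PML

namespace PML
namespace Craig

set_option maxRecDepth 10000

open Fml PF

/-! ### Modal helpers -/

lemma imp_trans {A B C : Fml} (h1 : NQGL (A.imp B)) (h2 : NQGL (B.imp C)) :
    NQGL (A.imp C) := by
  have t := tauN (((atm 0).imp (atm 1)).imp (((atm 1).imp (atm 2)).imp
    ((atm 0).imp (atm 2)))) [A, B, C] (by decide)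
  exact (t.mp h1).mp h2

lemma box_mono {A B : Fml} (h : NQGL (A.imp B)) : NQGL (A.box.imp B.box) :=
  (NQGL.ax (Ax.k A B)).mp h.nec

lemma box_land (X Y : Fml) : NQGL (X.box.imp (Y.box.imp ((X.land Y).box))) := by
  have t1 : NQGL (X.imp (Y.imp (X.land Y))) :=
    tauN ((atm 0).imp ((atm 1).imp ((atm 0).pand (atm 1)))) [X, Y] (by decide)
  have t5 : NQGL (X.box.imp ((Y.imp (X.land Y)).box)) := box_mono t1
  have t4 : NQGL (((Y.imp (X.land Y)).box).imp (Y.box.imp ((X.land Y).box))) :=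
    .ax (Ax.k _ _)
  exact imp_trans t5 t4

lemma boxIter_lob (A : Fml) (n : ℕ) :
    NQGL ((boxIter (n+1) Fml.falsum).imp ((((A.box.imp A).box)).imp A.box)) := by
  induction n with
  | zero =>
    have h1 : NQGL ((Fml.falsum.box).imp A.box) := box_mono (.ax (Ax.exfalso A))
    have t := tauN (((atm 0).imp (atm 1)).imp ((atm 0).imp ((atm 2).imp (atm 1))))
      [Fml.falsum.box, A.box, (A.box.imp A).box] (by decide)
    exact t.mp h1
  | succ n ih =>
    have h1 : NQGL ((boxIter (n+2) Fml.falsum).imp ((((A.box.imp A).box).imp A.box).box)) :=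
      (NQGL.ax (Ax.k _ _)).mp ih.nec
    have h2 : NQGL (((((A.box.imp A).box).imp A.box).box).imp
        ((((A.box.imp A).box).box).imp (A.box.box))) := .ax (Ax.k _ _)
    have h3 : NQGL (((A.box.imp A).box).imp (((A.box.imp A).box).box)) := .four _
    have h4 : NQGL (((A.box.imp A).box).imp ((A.box.box).imp A.box)) := .ax (Ax.k A.box A)
    have t := tauN (((atm 0).imp (atm 1)).imp ((((atm 1).imp ((atm 3).imp (atm 4)))).imp
        ((((atm 2).imp (atm 3))).imp ((((atm 2).imp ((atm 4).imp (atm 5)))).imp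
        ((atm 0).imp ((atm 2).imp (atm 5)))))))
      [boxIter (n+2) Fml.falsum, (((A.box.imp A).box).imp A.box).box, (A.box.imp A).box,
        ((A.box.imp A).box).box, A.box.box, A.box] (by decide)
    exact (((t.mp h1).mp h2).mp h3).mp h4

lemma lob (A : Fml) : NQGL ((((A.box.imp A).box)).imp A.box) :=
  .bl (fun n => boxIter_lob A n)

/-! ### Part 1 : NQGL proves ante → cons -/

def FQ : Fml := .pred 1 [1]
def FR : Fml := .pred 2 [2]
def P0 : Fml := .pred 0 [0]
def AQ : Fml := .all 0 ((FQ.imp P0).box)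
def AR : Fml := .all 0 ((FR.imp P0).box)
def EQ : Fml := AQ.iff FQ
def ER : Fml := AR.iff FR
def B1 : Fml := (EQ.boxdot).land FQ
def B2 : Fml := (ER.boxdot).imp FR
def Sfp : Fml := ((EQ.boxdot).land (ER.boxdot)).imp (FQ.iff FR)

lemma AQ_eq : AMonAp (Fml.pred 1 [1]) = AQ := rfl
lemma AR_eq : AMonAp (Fml.pred 2 [2]) = AR := rfl
lemma ante_eq : PML.ante = (Fml.all 1 (B1.neg)).neg := rfl
lemma cons_eq : PML.cons = Fml.all 2 B2 := rfl

lemma c4 (X Y : Fml) (hfree : 0 ∉ ((X.iff Y).box).free) :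
    NQGL (((X.iff Y).box).imp ((Fml.all 0 ((X.imp P0).box)).imp
      (Fml.all 0 ((Y.imp P0).box)))) := by
  have d0 : NQGL ((X.iff Y).imp ((X.imp P0).imp (Y.imp P0))) :=
    tauN (((atm 0).piff (atm 1)).imp (((atm 0).imp (atm 2)).imp ((atm 1).imp (atm 2))))
      [X, Y, P0] (by decide)
  have d1 := box_mono d0
  have d2 : NQGL ((((X.imp P0).imp (Y.imp P0)).box).imp
      (((X.imp P0).box).imp ((Y.imp P0).box))) := .ax (Ax.k _ _)
  have d3 := imp_trans d1 d2
  have d4 := NQGL.gen 0 d3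
  have d5 : NQGL ((Fml.all 0 (((X.iff Y).box).imp (((X.imp P0).box).imp ((Y.imp P0).box)))).imp
      ((Fml.all 0 ((X.iff Y).box)).imp
        (Fml.all 0 (((X.imp P0).box).imp ((Y.imp P0).box))))) := .ax (Ax.allK _ _ 0)
  have d6 := d5.mp d4
  have d7 : NQGL (((X.iff Y).box).imp (Fml.all 0 ((X.iff Y).box))) := .ax (Ax.allV _ 0 hfree)
  have d8 : NQGL ((Fml.all 0 (((X.imp P0).box).imp ((Y.imp P0).box))).imp
      ((Fml.all 0 ((X.imp P0).box)).imp (Fml.all 0 ((Y.imp P0).box)))) := .ax (Ax.allK _ _ 0)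
  exact imp_trans (imp_trans d7 d6) d8

lemma c4r (X Y : Fml) (hfree : 0 ∉ ((X.iff Y).box).free) :
    NQGL (((X.iff Y).box).imp ((Fml.all 0 ((Y.imp P0).box)).imp
      (Fml.all 0 ((X.imp P0).box)))) := by
  have d0 : NQGL ((X.iff Y).imp ((Y.imp P0).imp (X.imp P0))) :=
    tauN (((atm 0).piff (atm 1)).imp (((atm 1).imp (atm 2)).imp ((atm 0).imp (atm 2))))
      [X, Y, P0] (by decide)
  have d1 := box_mono d0
  have d2 : NQGL ((((Y.imp P0).imp (X.imp P0)).box).imp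
      (((Y.imp P0).box).imp ((X.imp P0).box))) := .ax (Ax.k _ _)
  have d3 := imp_trans d1 d2
  have d4 := NQGL.gen 0 d3
  have d5 : NQGL ((Fml.all 0 (((X.iff Y).box).imp (((Y.imp P0).box).imp ((X.imp P0).box)))).imp
      ((Fml.all 0 ((X.iff Y).box)).imp
        (Fml.all 0 (((Y.imp P0).box).imp ((X.imp P0).box))))) := .ax (Ax.allK _ _ 0)
  have d6 := d5.mp d4
  have d7 : NQGL (((X.iff Y).box).imp (Fml.all 0 ((X.iff Y).box))) := .ax (Ax.allV _ 0 hfree)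
  have d8 : NQGL ((Fml.all 0 (((Y.imp P0).box).imp ((X.imp P0).box))).imp
      ((Fml.all 0 ((Y.imp P0).box)).imp (Fml.all 0 ((X.imp P0).box)))) := .ax (Ax.allK _ _ 0)
  exact imp_trans (imp_trans d7 d6) d8

lemma boxdot_boxed (E : Fml) : NQGL ((E.boxdot).imp ((E.boxdot).box)) := by
  have a1 : NQGL (E.box.imp E.box.box) := .four E
  have a2 := box_land E.box E
  have t := tauN ((((atm 0).imp (atm 2))).imp ((((atm 2).imp ((atm 0).imp (atm 3)))).imp
      ((((atm 0).pand (atm 1))).imp (atm 3))))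
    [E.box, E, E.box.box, (E.box.land E).box] (by decide)
  exact (t.mp a1).mp a2

lemma boxS_S : NQGL ((Sfp.box).imp Sfp) := by
  have u1 := boxdot_boxed EQ
  have u2 := boxdot_boxed ER
  have b1 := box_land EQ.boxdot ER.boxdot
  have b2 : NQGL ((Sfp.box).imp ((((EQ.boxdot).land (ER.boxdot)).box).imp
      ((FQ.iff FR).box))) := .ax (Ax.k _ _)
  have u3 : NQGL ((Sfp.box).imp ((EQ.boxdot).imp ((ER.boxdot).imp ((FQ.iff FR).box)))) := by
    have t := tauN ((((atm 1).imp (atm 3))).imp ((((atm 2).imp (atm 4))).imp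
        ((((atm 3).imp ((atm 4).imp (atm 5)))).imp ((((atm 0).imp ((atm 5).imp (atm 6)))).imp
        ((atm 0).imp ((atm 1).imp ((atm 2).imp (atm 6))))))))
      [Sfp.box, EQ.boxdot, ER.boxdot, (EQ.boxdot).box, (ER.boxdot).box,
        ((EQ.boxdot).land (ER.boxdot)).box, (FQ.iff FR).box] (by decide)
    exact (((t.mp u1).mp u2).mp b1).mp b2
  have c4a := c4 FQ FR (by decide)
  have c4b := c4r FQ FR (by decide)
  -- atoms: 0 □S, 1 □(FQ↔FR), 2 □EQ, 3 AQ, 4 FQ, 5 □ER, 6 AR, 7 FR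
  have t := tauN
    (((( atm 0).imp (((atm 2).pand ((atm 3).piff (atm 4))).imp
        (((atm 5).pand ((atm 6).piff (atm 7))).imp (atm 1))))).imp
      (((( atm 1).imp ((atm 3).imp (atm 6)))).imp
      (((( atm 1).imp ((atm 6).imp (atm 3)))).imp
      ((atm 0).imp ((((atm 2).pand ((atm 3).piff (atm 4))).pand
          ((atm 5).pand ((atm 6).piff (atm 7)))).imp ((atm 4).piff (atm 7)))))))
    [Sfp.box, (FQ.iff FR).box, EQ.box, AQ, FQ, ER.box, AR, FR] (by decide)
  exact ((t.mp u3).mp c4a).mp c4b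

lemma Sprov : NQGL Sfp := boxS_S.mp ((lob Sfp).mp boxS_S.nec)

lemma B1_B2 : NQGL (B1.imp B2) := by
  have t := tauN (((((atm 0).pand (atm 1)).imp ((atm 2).piff (atm 3)))).imp
      ((((atm 0).pand (atm 2))).imp ((atm 1).imp (atm 3))))
    [EQ.boxdot, ER.boxdot, FQ, FR] (by decide)
  exact t.mp Sprov

lemma B1_cons : NQGL (B1.imp PML.cons) := by
  have v2 := NQGL.gen 2 B1_B2
  have v3 : NQGL ((Fml.all 2 B1).imp (Fml.all 2 B2)) := (NQGL.ax (Ax.allK B1 B2 2)).mp v2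
  have v4 : NQGL (B1.imp (Fml.all 2 B1)) := .ax (Ax.allV B1 2 (by decide))
  exact imp_trans v4 v3

lemma part1 : NQGL (PML.ante.imp PML.cons) := by
  have w1 : NQGL ((PML.cons.neg).imp (B1.neg)) := by
    have t := tauN ((((atm 0).imp (atm 1))).imp (((atm 1).neg).imp ((atm 0).neg)))
      [B1, PML.cons] (by decide)
    exact t.mp B1_cons
  have w2 := NQGL.gen 1 w1
  have w3 : NQGL ((Fml.all 1 (PML.cons.neg)).imp (Fml.all 1 (B1.neg))) :=
    (NQGL.ax (Ax.allK _ _ 1)).mp w2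
  have w4 : NQGL ((PML.cons.neg).imp (Fml.all 1 (PML.cons.neg))) :=
    .ax (Ax.allV _ 1 (by decide))
  have w5 := imp_trans w4 w3
  have t := tauN (((((atm 0).neg).imp (atm 1))).imp (((atm 1).neg).imp (atm 0)))
    [PML.cons, Fml.all 1 (B1.neg)] (by decide)
  exact t.mp w5

end Craig
end PML

namespace PML
namespace Craig

open Fml

/-! ### Generic semantic lemmas -/

lemma sat_agree (M : KModel) (A : Fml) :
    ∀ (w : M.W) (ρ1 ρ2 : ℕ → M.Dom), (∀ x ∈ A.free, ρ1 x = ρ2 x) →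
      (Sat M A w ρ1 ↔ Sat M A w ρ2) := by
  induction A with
  | verum => intro w ρ1 ρ2 _; simp [Sat]
  | falsum => intro w ρ1 ρ2 _; simp [Sat]
  | pvar q => intro w ρ1 ρ2 _; simp [Sat]
  | pred P args =>
    intro w ρ1 ρ2 h
    have harg : args.map ρ1 = args.map ρ2 :=
      List.map_congr_left (fun x hx => h x (by simpa [Fml.free] using hx))
    simp only [Sat, harg]
  | neg A ih => intro w ρ1 ρ2 h; simp only [Sat]; rw [ih w ρ1 ρ2 h]
  | imp A B ihA ihB =>
    intro w ρ1 ρ2 h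
    simp only [Sat]
    rw [ihA w ρ1 ρ2 (fun x hx => h x (Finset.mem_union_left _ hx)),
        ihB w ρ1 ρ2 (fun x hx => h x (Finset.mem_union_right _ hx))]
  | all u A ih =>
    intro w ρ1 ρ2 h
    simp only [Sat]
    refine forall_congr' fun a => forall_congr' fun _ => ih w _ _ fun x hx => ?_
    by_cases hxu : x = u
    · subst hxu; simp [Function.update_self]
    · rw [Function.update_of_ne hxu, Function.update_of_ne hxu]
      exact h x (Finset.mem_erase.mpr ⟨hxu, hx⟩)
  | box A ih =>
    intro w ρ1 ρ2 h
    simp only [Sat]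
    exact forall_congr' fun v => forall_congr' fun _ => ih v ρ1 ρ2 h

lemma sat_rename (M : KModel) (A : Fml) (u v : ℕ) :
    ∀ (_ : v ∉ A.bound) (w : M.W) (ρ : ℕ → M.Dom),
      Sat M (A.rename u v) w ρ ↔ Sat M A w (Function.update ρ u (ρ v)) := by
  induction A with
  | verum => intros; simp [Fml.rename, Sat]
  | falsum => intros; simp [Fml.rename, Sat]
  | pvar q => intros; simp [Fml.rename, Sat]
  | pred P args =>
    intro _ w ρ
    simp only [Fml.rename, Sat]
    have harg : (args.map fun x => if x = u then v else x).map ρ =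
        args.map (Function.update ρ u (ρ v)) := by
      rw [List.map_map]
      apply List.map_congr_left
      intro x _
      by_cases hxu : x = u
      · subst hxu; simp [Function.update_self]
      · simp [Function.comp, hxu, Function.update_of_ne hxu]
    rw [harg]
  | neg A ih => intro hv w ρ; simp only [Fml.rename, Sat]; rw [ih hv w ρ]
  | imp A B ihA ihB =>
    intro hv w ρ
    have hvA : v ∉ A.bound := fun h => hv (Finset.mem_union_left _ h)
    have hvB : v ∉ B.bound := fun h => hv (Finset.mem_union_right _ h)
    simp only [Fml.rename, Sat]
    rw [ihA hvA w ρ, ihB hvB w ρ]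
  | all wu A ih =>
    intro hv w ρ
    have hvne : v ≠ wu := fun h => hv (by rw [h]; exact Finset.mem_insert_self _ _)
    have hvb : v ∉ A.bound := fun h => hv (Finset.mem_insert_of_mem h)
    by_cases hwu : wu = u
    · subst hwu
      simp only [Fml.rename, if_pos rfl, Sat]
      refine forall_congr' fun a => forall_congr' fun _ => ?_
      rw [Function.update_idem]
    · simp only [Fml.rename, if_neg hwu, Sat]
      refine forall_congr' fun a => forall_congr' fun _ => ?_
      rw [ih hvb w (Function.update ρ wu a), Function.update_of_ne hvne,
        Function.update_comm hwu]
  | box A ih =>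
    intro hv w ρ
    simp only [Fml.rename, Sat]
    exact forall_congr' fun w' => forall_congr' fun _ => ih hv w' ρ

lemma ax_sound (M : KModel) {A : Fml} (h : Ax A) : MVal M A := by
  cases h with
  | imp1 A B => intro w ρ hρ; simp only [Sat]; tauto
  | imp2 A B C => intro w ρ hρ; simp only [Sat]; tauto
  | contra A B => intro w ρ hρ; simp only [Sat]; tauto
  | verum => intro w ρ hρ; simp [Sat]
  | exfalso A => intro w ρ hρ; simp only [Sat]; tauto
  | negE A => intro w ρ hρ; simp only [Sat]; tauto
  | negI A => intro w ρ hρ; simp only [Sat]; tauto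
  | allE A u v hv =>
    intro w ρ hρ
    simp only [Sat]
    intro hall
    rw [sat_rename M A u v hv w ρ]
    exact hall (ρ v) (hρ v)
  | allK A B u =>
    intro w ρ hρ
    simp only [Sat]
    intro h1 h2 a ha
    exact h1 a ha (h2 a ha)
  | allV A u hu =>
    intro w ρ hρ
    simp only [Sat]
    intro h a ha
    refine (sat_agree M A w ρ _ (fun x hx => ?_)).mp h
    have hxu : x ≠ u := fun e => hu (by rw [← e]; exact hx)
    exact (Function.update_of_ne hxu _ _).symm
  | k A B =>
    intro w ρ hρ
    simp only [Sat]
    intro h1 h2 v hv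
    exact h1 v hv (h2 v hv)

theorem nqgl_sound (M : KModel) (htr : ∀ {a b c : M.W}, M.R a b → M.R b c → M.R a c)
    (hb : ∀ w : M.W, ∃ n, ∀ ρ, Sat M (boxIter (n+1) Fml.falsum) w ρ) :
    ∀ {A : Fml}, NQGL A → MVal M A := by
  intro A h
  induction h with
  | ax h => exact ax_sound M h
  | four A =>
    intro w ρ hρ
    simp only [Sat]
    intro h1 v hv v' hv'
    exact h1 v' (htr hv hv')
  | mp h1 h2 ih1 ih2 =>
    intro w ρ hρ
    have := ih1 w ρ hρ
    simp only [Sat] at this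
    exact this (ih2 w ρ hρ)
  | nec h ih =>
    intro w ρ hρ
    simp only [Sat]
    intro v hv
    exact ih v ρ (fun x => M.mono hv (hρ x))
  | gen u h ih =>
    intro w ρ hρ
    simp only [Sat]
    intro a ha
    apply ih w
    intro x
    by_cases hxu : x = u
    · subst hxu; simpa [Function.update_self] using ha
    · rw [Function.update_of_ne hxu]; exact hρ x
  | bl h ih =>
    intro w ρ hρ
    obtain ⟨n, hn⟩ := hb w
    have := ih n w ρ hρ
    simp only [Sat] at this
    exact this (hn ρ)

/-! ### The model MM -/

def MM : KModel where
  W := ℕ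
  R := fun m n => n < m
  Dom := ℕ
  D := fun n => {m | n ≤ m}
  Dne := fun n => ⟨n, le_refl n⟩
  mono := by intro w w' h x hx; simp only [Set.mem_setOf_eq] at *; omega
  I := fun w P L => if P = 0 then ∀ m ∈ L, m ≠ w + 1 else w % 2 = 0
  V := fun _ _ => False

attribute [reducible] MM

lemma MM_I_def (w P : ℕ) (L : List ℕ) :
    MM.I w P L = if P = 0 then ∀ m ∈ L, m ≠ w + 1 else w % 2 = 0 := rfl

lemma MM_Ic {c : ℕ} (hc : ¬ c = 0) (w : ℕ) (L : List ℕ) : MM.I w c L ↔ w % 2 = 0 := by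
  rw [MM_I_def]; simp [hc]

lemma MM_I0 (w : ℕ) (L : List ℕ) : MM.I w 0 L ↔ ∀ m ∈ L, m ≠ w + 1 := Iff.rfl

lemma MM_trans : ∀ {a b c : ℕ}, MM.R a b → MM.R b c → MM.R a c := by
  intro a b c h1 h2
  have h1' : b < a := h1
  have h2' : c < b := h2
  show c < a
  omega

lemma MM_iterbot : ∀ (n w : ℕ), w < n → ∀ ρ, Sat MM (boxIter n Fml.falsum) w ρ := by
  intro n
  induction n with
  | zero => intro w hw ρ; exact absurd hw (by omega)
  | succ n ih =>
    intro w hw ρ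
    simp only [boxIter, Sat]
    show ∀ v : ℕ, v < w → Sat MM (boxIter n Fml.falsum) v ρ
    intro v hv
    exact ih v (by omega) ρ

lemma MM_bdd : ∀ w : MM.W, ∃ n, ∀ ρ, Sat MM (boxIter (n+1) Fml.falsum) w ρ :=
  fun (w : ℕ) => ⟨w, fun ρ => MM_iterbot (w+1) w (by omega) ρ⟩

/-! ### Graded back-and-forth -/

def rk : Fml → ℕ
  | .neg A => rk A
  | .imp A B => rk A + rk B
  | .all _ A => rk A + 1
  | .box A => rk A + 1
  | _ => 0

def Rel (j v1 v2 : ℕ) (ρ1 ρ2 : ℕ → ℕ) : Prop :=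
  (∀ x, v1 ≤ ρ1 x ∧ v2 ≤ ρ2 x ∧
    (ρ1 x - v1 = ρ2 x - v2 ∨ (2 ≤ ρ1 x - v1 ∧ 2 ≤ ρ2 x - v2))) ∧
  (v1 = v2 ∨ (v2 = v1 + 1 ∧ 3*j ≤ v1))

lemma Rel.atom {j v1 v2 ρ1 ρ2} (h : Rel j v1 v2 ρ1 ρ2) (x : ℕ) :
    ρ1 x = v1 + 1 ↔ ρ2 x = v2 + 1 := by
  obtain ⟨h1, h2⟩ := h
  obtain ⟨a, b, c⟩ := h1 x
  rcases h2 with rfl | ⟨rfl, hj⟩ <;> rcases c with c | ⟨c1, c2⟩ <;> omega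

lemma Rel.box1 {j v1 v2 ρ1 ρ2} (h : Rel (j+1) v1 v2 ρ1 ρ2) (v1' : ℕ) (hv : v1' < v1) :
    ∃ v2' < v2, Rel j v1' v2' ρ1 ρ2 := by
  obtain ⟨h1, h2⟩ := h
  rcases h2 with rfl | ⟨rfl, hj⟩
  · refine ⟨v1', hv, fun x => ?_, Or.inl rfl⟩
    obtain ⟨a, b, c⟩ := h1 x
    rcases c with c | c
    · exact ⟨by omega, by omega, Or.inl (by omega)⟩
    · exact ⟨by omega, by omega, Or.inr (by omega)⟩
  · by_cases hc : 3*j ≤ v1'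
    · refine ⟨v1' + 1, by omega, fun x => ?_, Or.inr (by omega)⟩
      obtain ⟨a, b, c⟩ := h1 x
      rcases c with c | c
      · exact ⟨by omega, by omega, Or.inl (by omega)⟩
      · exact ⟨by omega, by omega, Or.inr (by omega)⟩
    · refine ⟨v1', by omega, fun x => ?_, Or.inl rfl⟩
      obtain ⟨a, b, c⟩ := h1 x
      exact ⟨by omega, by omega, Or.inr (by omega)⟩

lemma Rel.box2 {j v1 v2 ρ1 ρ2} (h : Rel (j+1) v1 v2 ρ1 ρ2) (v2' : ℕ) (hv : v2' < v2) :
    ∃ v1' < v1, Rel j v1' v2' ρ1 ρ2 := by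
  obtain ⟨h1, h2⟩ := h
  rcases h2 with rfl | ⟨rfl, hj⟩
  · refine ⟨v2', hv, fun x => ?_, Or.inl rfl⟩
    obtain ⟨a, b, c⟩ := h1 x
    rcases c with c | c
    · exact ⟨by omega, by omega, Or.inl (by omega)⟩
    · exact ⟨by omega, by omega, Or.inr (by omega)⟩
  · by_cases hc : 3*j + 1 ≤ v2'
    · refine ⟨v2' - 1, by omega, fun x => ?_, Or.inr (by omega)⟩
      obtain ⟨a, b, c⟩ := h1 x
      rcases c with c | c
      · exact ⟨by omega, by omega, Or.inl (by omega)⟩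
      · exact ⟨by omega, by omega, Or.inr (by omega)⟩
    · refine ⟨v2', by omega, fun x => ?_, Or.inl rfl⟩
      obtain ⟨a, b, c⟩ := h1 x
      exact ⟨by omega, by omega, Or.inr (by omega)⟩

lemma Rel.all1 {j v1 v2 ρ1 ρ2} (h : Rel (j+1) v1 v2 ρ1 ρ2) (u a : ℕ) (ha : v1 ≤ a) :
    ∃ b, v2 ≤ b ∧ Rel j v1 v2 (Function.update ρ1 u a) (Function.update ρ2 u b) := by
  obtain ⟨h1, h2⟩ := h
  refine ⟨v2 + (a - v1), by omega, fun x => ?_, ?_⟩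
  · by_cases hxu : x = u
    · subst hxu
      simp only [Function.update_self]
      exact ⟨ha, by omega, Or.inl (by omega)⟩
    · rw [Function.update_of_ne hxu, Function.update_of_ne hxu]
      exact h1 x
  · rcases h2 with rfl | ⟨rfl, hj⟩
    · exact Or.inl rfl
    · exact Or.inr ⟨rfl, by omega⟩

lemma Rel.all2 {j v1 v2 ρ1 ρ2} (h : Rel (j+1) v1 v2 ρ1 ρ2) (u b : ℕ) (hb : v2 ≤ b) :
    ∃ a, v1 ≤ a ∧ Rel j v1 v2 (Function.update ρ1 u a) (Function.update ρ2 u b) := by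
  obtain ⟨h1, h2⟩ := h
  refine ⟨v1 + (b - v2), by omega, fun x => ?_, ?_⟩
  · by_cases hxu : x = u
    · subst hxu
      simp only [Function.update_self]
      exact ⟨by omega, hb, Or.inl (by omega)⟩
    · rw [Function.update_of_ne hxu, Function.update_of_ne hxu]
      exact h1 x
  · rcases h2 with rfl | ⟨rfl, hj⟩
    · exact Or.inl rfl
    · exact Or.inr ⟨rfl, by omega⟩

lemma transfer : ∀ (G : Fml), G.preds ⊆ {0} → ∀ (j : ℕ), rk G ≤ j →
    ∀ v1 v2 ρ1 ρ2, Rel j v1 v2 ρ1 ρ2 → (Sat MM G v1 ρ1 ↔ Sat MM G v2 ρ2) := by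
  intro G
  induction G with
  | verum => intros; simp [Sat]
  | falsum => intros; simp [Sat]
  | pvar q => intros; simp only [Sat]
  | pred P args =>
    intro hP j _ v1 v2 ρ1 ρ2 hR
    have hP0 : P = 0 := by
      have := hP (show P ∈ (Fml.pred P args).preds by simp [Fml.preds])
      simpa using this
    subst hP0
    simp only [Sat]
    simp only [if_true]
    constructor
    · intro h m hm
      obtain ⟨x, hx, rfl⟩ := List.mem_map.mp hm
      intro he
      exact h (ρ1 x) (List.mem_map.mpr ⟨x, hx, rfl⟩) ((hR.atom x).mpr he)
    · intro h m hm
      obtain ⟨x, hx, rfl⟩ := List.mem_map.mp hm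
      intro he
      exact h (ρ2 x) (List.mem_map.mpr ⟨x, hx, rfl⟩) ((hR.atom x).mp he)
  | neg A ih =>
    intro hP j hj v1 v2 ρ1 ρ2 hR
    simp only [Sat]
    rw [ih hP j hj v1 v2 ρ1 ρ2 hR]
  | imp A B ihA ihB =>
    intro hP j hj v1 v2 ρ1 ρ2 hR
    have hPA : A.preds ⊆ {0} := fun x hx => hP (Finset.mem_union_left _ hx)
    have hPB : B.preds ⊆ {0} := fun x hx => hP (Finset.mem_union_right _ hx)
    have hj' : rk A + rk B ≤ j := hj
    simp only [Sat]
    rw [ihA hPA j (by omega) v1 v2 ρ1 ρ2 hR, ihB hPB j (by omega) v1 v2 ρ1 ρ2 hR]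
  | all u A ih =>
    intro hP j hj v1 v2 ρ1 ρ2 hR
    have hj' : rk A + 1 ≤ j := hj
    obtain ⟨j', rfl⟩ : ∃ j', j = j' + 1 := ⟨j - 1, by omega⟩
    simp only [Sat]
    constructor
    · intro hall b hb
      obtain ⟨a, ha, hrel⟩ := Rel.all2 hR u b hb
      exact (ih hP j' (by omega) v1 v2 _ _ hrel).mp (hall a ha)
    · intro hall a ha
      obtain ⟨b, hbb, hrel⟩ := Rel.all1 hR u a ha
      exact (ih hP j' (by omega) v1 v2 _ _ hrel).mpr (hall b hbb)
  | box A ih =>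
    intro hP j hj v1 v2 ρ1 ρ2 hR
    have hj' : rk A + 1 ≤ j := hj
    obtain ⟨j', rfl⟩ : ∃ j', j = j' + 1 := ⟨j - 1, by omega⟩
    simp only [Sat]
    constructor
    · intro hall v2' hv2'
      obtain ⟨v1', hv1', hrel⟩ := Rel.box2 hR v2' hv2'
      exact (ih hP j' (by omega) _ _ _ _ hrel).mp (hall v1' hv1')
    · intro hall v1' hv1'
      obtain ⟨v2', hv2', hrel⟩ := Rel.box1 hR v1' hv1'
      exact (ih hP j' (by omega) _ _ _ _ hrel).mpr (hall v2' hv2')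

/-! ### Truth of ante / falsity of cons in MM -/

lemma sat_land (M : KModel) {X Y : Fml} {w : M.W} {ρ : ℕ → M.Dom} :
    Sat M (X.land Y) w ρ ↔ (Sat M X w ρ ∧ Sat M Y w ρ) := by
  simp only [Fml.land, Sat]; tauto

lemma sat_iff (M : KModel) {X Y : Fml} {w : M.W} {ρ : ℕ → M.Dom} :
    Sat M (X.iff Y) w ρ ↔ (Sat M X w ρ ↔ Sat M Y w ρ) := by
  simp only [Fml.iff, Fml.land, Sat]; tauto

lemma sat_ex (M : KModel) {u : ℕ} {A : Fml} {w : M.W} {ρ : ℕ → M.Dom} :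
    Sat M (Fml.ex u A) w ρ ↔ ∃ a ∈ M.D w, Sat M A w (Function.update ρ u a) := by
  simp only [Fml.ex, Sat, not_forall, Classical.not_imp, not_not, exists_prop]

lemma sat_boxdot (M : KModel) {X : Fml} {w : M.W} {ρ : ℕ → M.Dom} :
    Sat M (X.boxdot) w ρ ↔ ((∀ v, M.R w v → Sat M X v ρ) ∧ Sat M X w ρ) := by
  rw [Fml.boxdot, sat_land]
  simp only [Sat]

lemma sat_AMonAp (c : ℕ) (hc : ¬ c = 0) (v : ℕ) (ρ : ℕ → ℕ) :
    Sat MM (Fml.all 0 (((Fml.pred c [c]).imp (Fml.pred 0 [0])).box)) v ρ ↔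
      (∀ a : ℕ, v ≤ a → ∀ v' : ℕ, v' < v → (v' % 2 = 0 → a ≠ v' + 1)) := by
  simp only [Sat, List.map_cons, List.map_nil]
  refine forall_congr' fun a => imp_congr Iff.rfl ?_
  refine forall_congr' fun v' => imp_congr Iff.rfl ?_
  refine imp_congr (MM_Ic hc v' _) ?_
  simp only [if_true]
  simp [Function.update_self]

lemma sat_E (c : ℕ) (hc : ¬ c = 0) (v : ℕ) (ρ : ℕ → ℕ) :
    Sat MM ((AMonAp (Fml.pred c [c])).iff (Fml.pred c [c])) v ρ := by
  have hA : AMonAp (Fml.pred c [c]) =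
      Fml.all 0 (((Fml.pred c [c]).imp (Fml.pred 0 [0])).box) := by
    simp [AMonAp, AMon, Fml.psub]
  rw [hA, sat_iff, sat_AMonAp c hc]
  have hpc : Sat MM (Fml.pred c [c]) v ρ ↔ v % 2 = 0 := by
    simp only [Sat, List.map_cons, List.map_nil]
    exact MM_Ic hc v _
  rw [hpc]
  constructor
  · intro h
    by_contra hodd
    exact h v le_rfl (v-1) (by omega) (by omega) (by omega)
  · intro hev a ha v' hv' hv'e heq
    omega

lemma sat_boxdotE (c : ℕ) (hc : ¬ c = 0) (v : ℕ) (ρ : ℕ → ℕ) :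
    Sat MM (Fml.boxdot ((AMonAp (Fml.pred c [c])).iff (Fml.pred c [c]))) v ρ := by
  rw [sat_boxdot]
  exact ⟨fun v' _ => sat_E c hc v' ρ, sat_E c hc v ρ⟩

lemma ante_true (w : ℕ) (hw : w % 2 = 0) (ρ : ℕ → ℕ) : Sat MM PML.ante w ρ := by
  rw [show PML.ante = Fml.ex 1 ((Fml.boxdot ((AMonAp (Fml.pred 1 [1])).iff
      (Fml.pred 1 [1]))).land (Fml.pred 1 [1])) from rfl, sat_ex]
  refine ⟨w, le_refl w, ?_⟩
  rw [sat_land]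
  refine ⟨sat_boxdotE 1 (by omega) w _, ?_⟩
  show MM.I w 1 ([1].map (Function.update ρ 1 w))
  rw [MM_Ic (by omega) w _]
  exact hw

lemma cons_false (w : ℕ) (hw : w % 2 = 1) (ρ : ℕ → ℕ) : ¬ Sat MM PML.cons w ρ := by
  intro h
  rw [show PML.cons = Fml.all 2 ((Fml.boxdot ((AMonAp (Fml.pred 2 [2])).iff
      (Fml.pred 2 [2]))).imp (Fml.pred 2 [2])) from rfl] at h
  simp only [Sat] at h
  have h1 := h w (le_refl w)
  have h2 := h1 (sat_boxdotE 2 (by omega) w _)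
  have h3 : w % 2 = 0 := by
    have : MM.I w 2 ([2].map (Function.update ρ 2 w)) := h2
    exact (MM_Ic (by omega) w _).mp this
  omega

lemma part2 : ¬ ∃ G : Fml, G.preds ⊆ {0} ∧ G.pvars = ∅ ∧ G.free = ∅ ∧
    NQGL (PML.ante.imp G) ∧ NQGL (G.imp PML.cons) := by
  rintro ⟨G, hpreds, -, -, h1, h2⟩
  set K := rk G with hK
  have hrel : Rel K (6*K+6) (6*K+7) (fun _ => 6*K+6) (fun _ => 6*K+7) := by
    refine ⟨fun x => ⟨le_refl _, le_refl _, Or.inl ?_⟩, Or.inr ⟨rfl, by omega⟩⟩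
    show (6*K+6) - (6*K+6) = (6*K+7) - (6*K+7)
    omega
  have hsat1 : Sat MM G (6*K+6) (fun _ => 6*K+6) := by
    have hs := nqgl_sound MM MM_trans MM_bdd h1 (6*K+6) (fun _ => 6*K+6) (fun x => le_refl (6*K+6))
    simp only [Sat] at hs
    exact hs (ante_true _ (by omega) _)
  have hsat2 : ¬ Sat MM G (6*K+7) (fun _ => 6*K+7) := by
    intro hg
    have hs := nqgl_sound MM MM_trans MM_bdd h2 (6*K+7) (fun _ => 6*K+7) (fun x => le_refl (6*K+7))
    simp only [Sat] at hs
    exact cons_false _ (by omega) _ (hs hg)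
  exact hsat2 ((transfer G hpreds K le_rfl _ _ _ _ hrel).mp hsat1)

end Craig
end PML

open PML PML.Fml in
/-- NQGL proves ante → cons, but this implication has no interpolant
in the shared predicate symbol P; hence NQGL lacks the Craig interpolation property. -/
theorem stmt19 :
    NQGL (PML.ante.imp PML.cons) ∧
    ¬ ∃ G : Fml, G.preds ⊆ {0} ∧ G.pvars = ∅ ∧ G.free = ∅ ∧
        NQGL (PML.ante.imp G) ∧ NQGL (G.imp PML.cons) :=
  ⟨PML.Craig.part1, PML.Craig.part2⟩
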